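/- Fix m ∈ ℕ, m ≥ 2, let g_m : [0,1] → [0,1] be the multiple-tent map, and let μ be Lebesgue measure restricted to [0,1] (a probability measure invariant under g_m). Then g_m is strongly mixing with respect to μ: for all measurable sets A, B ⊆ [0,1], μ((g_m^n)⁻¹(A) ∩ B) → μ(A)·μ(B) as n → ∞. -/

import Mathlib

open MeasureTheory Filter Topology Set

/-- The multiple-tent map `g_m : [0,1] → [0,1]`, `g_m(x) = mx − 2j` on
`[2j/m,(2j+1)/m]` and `g_m(x) = −mx + 2j` on `[(2j−1)/m, 2j/m]`; equivalently
`g_m(x) = 1 − |((mx) mod 2) − 1|`. -/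
noncomputable def tentMap (m : ℕ) (x : ℝ) : ℝ :=
  1 - |2 * Int.fract ((m : ℝ) * x / 2) - 1|

lemma tentMap_def (M : ℕ) (x : ℝ) :
    tentMap M x = 1 - |2 * Int.fract ((M : ℝ) * x / 2) - 1| := rfl

lemma tent1 (y : ℝ) : tentMap 1 y = 1 - |2 * Int.fract (y / 2) - 1| := by
  simp [tentMap]

lemma tent_periodic (y : ℝ) (k : ℤ) : tentMap 1 (y + 2 * k) = tentMap 1 y := by
  rw [tent1, tent1, show (y + 2 * (k:ℝ)) / 2 = y / 2 + k by ring, Int.fract_add_intCast]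

lemma tent_neg (y : ℝ) : tentMap 1 (-y) = tentMap 1 y := by
  rw [tent1, tent1, show -y / 2 = -(y / 2) by ring]
  rcases eq_or_ne (Int.fract (y / 2)) 0 with h | h
  · rw [Int.fract_neg_eq_zero.mpr h, h]
  · rw [Int.fract_neg h,
      show 2 * (1 - Int.fract (y / 2)) - 1 = -(2 * Int.fract (y / 2) - 1) by ring, abs_neg]

lemma tentT (M : ℕ) (x : ℝ) : tentMap M x = tentMap 1 ((M : ℝ) * x) := by
  simp [tentMap]

lemma tent_comp (a b : ℕ) (x : ℝ) : tentMap a (tentMap b x) = tentMap (a * b) x := by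
  rw [tentT a, tentT b, tentT (a * b)]
  set y := (b : ℝ) * x with hy
  rw [show ((a * b : ℕ) : ℝ) * x = (a : ℝ) * y by push_cast [hy]; ring]
  set f := Int.fract (y / 2) with hf
  have hf0 : 0 ≤ f := Int.fract_nonneg _
  have hf1 : f < 1 := Int.fract_lt_one _
  have hyf : y = 2 * f + 2 * (⌊y / 2⌋ : ℝ) := by
    have h := Int.fract_add_floor (y / 2)
    rw [hf]; linarith
  have hay : (a : ℝ) * y = (a : ℝ) * (2 * f) + 2 * ((a * ⌊y / 2⌋ : ℤ) : ℝ) := by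
    conv_lhs => rw [hyf]
    push_cast; ring
  have hT1 : tentMap 1 y = 1 - |2 * f - 1| := by rw [tent1, hf]
  rcases le_or_gt (2 * f) 1 with h | h
  · have : tentMap 1 y = 2 * f := by rw [hT1, abs_of_nonpos (by linarith)]; ring
    rw [this, hay, tent_periodic]
  · have : tentMap 1 y = 2 - 2 * f := by rw [hT1, abs_of_nonneg (by linarith)]; ring
    rw [this, show (a : ℝ) * (2 - 2 * f) = -((a:ℝ) * (2 * f)) + 2 * ((a : ℤ) : ℝ) by
      push_cast; ring, tent_periodic, tent_neg, hay, tent_periodic]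

lemma tent_iterate (m : ℕ) (n : ℕ) (hn : 1 ≤ n) : (tentMap m)^[n] = tentMap (m ^ n) := by
  induction n with
  | zero => omega
  | succ n ih =>
    rcases Nat.eq_or_lt_of_le hn with h | h
    · simp [← h]
    · have hn' : 1 ≤ n := by omega
      funext x
      rw [Function.iterate_succ_apply', ih hn', tent_comp, pow_succ, mul_comm]
lemma tent_cell_even (M : ℕ) (j : ℤ) (x : ℝ)
    (h0 : 2 * (j : ℝ) ≤ (M : ℝ) * x) (h1 : (M : ℝ) * x ≤ 2 * j + 1) :
    tentMap M x = (M : ℝ) * x - 2 * j := by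
  rw [tentMap_def]
  have hfr : Int.fract ((M : ℝ) * x / 2) = ((M : ℝ) * x - 2 * j) / 2 := by
    rw [show (M : ℝ) * x / 2 = ((M : ℝ) * x - 2 * j) / 2 + j by ring, Int.fract_add_intCast,
      Int.fract_eq_self.mpr ⟨by linarith, by linarith⟩]
  rw [hfr, show 2 * (((M : ℝ) * x - 2 * j) / 2) - 1 = (M : ℝ) * x - 2 * j - 1 by ring,
    abs_of_nonpos (by linarith)]
  ring

lemma tent_cell_odd (M : ℕ) (j : ℤ) (x : ℝ)
    (h0 : 2 * (j : ℝ) + 1 ≤ (M : ℝ) * x) (h1 : (M : ℝ) * x ≤ 2 * j + 2) :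
    tentMap M x = 2 * j + 2 - (M : ℝ) * x := by
  rcases eq_or_lt_of_le h1 with heq | hlt
  · rw [tentMap_def, heq, show (2 * (j : ℝ) + 2) / 2 = ((j + 1 : ℤ) : ℝ) by push_cast; ring,
      Int.fract_intCast]
    norm_num
  · rw [tentMap_def]
    have hfr : Int.fract ((M : ℝ) * x / 2) = ((M : ℝ) * x - 2 * j) / 2 := by
      rw [show (M : ℝ) * x / 2 = ((M : ℝ) * x - 2 * j) / 2 + j by ring, Int.fract_add_intCast,
        Int.fract_eq_self.mpr ⟨by linarith, by linarith⟩]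
    rw [hfr, show 2 * (((M : ℝ) * x - 2 * j) / 2) - 1 = (M : ℝ) * x - 2 * j - 1 by ring,
      abs_of_nonneg (by linarith)]
    ring

lemma vol_affine_preimage (A : Set ℝ) (hA : MeasurableSet A) (M : ℕ) (hM : 0 < M) (c : ℝ)
    (e : ℝ) (he : e = 1 ∨ e = -1) :
    volume ((fun x : ℝ => e * ((M : ℝ) * x) + c) ⁻¹' A) = volume A / M := by
  have hM0 : ((M : ℝ)) ≠ 0 := by positivity
  have h1 : (fun x : ℝ => e * ((M : ℝ) * x) + c) ⁻¹' A
      = ((M : ℝ) * ·) ⁻¹' ((fun y : ℝ => e * y + c) ⁻¹' A) := by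
    ext x; simp
  rw [h1, Real.volume_preimage_mul_left hM0]
  have h2 : volume ((fun y : ℝ => e * y + c) ⁻¹' A) = volume A := by
    rcases he with rfl | rfl
    · have : (fun y : ℝ => 1 * y + c) = (fun y : ℝ => y + c) := by funext y; ring
      rw [this, measure_preimage_add_right]
    · have : (fun y : ℝ => -1 * y + c) ⁻¹' A = Neg.neg ⁻¹' ((fun y : ℝ => y + c) ⁻¹' A) := by
        ext x; simp [neg_mul]
      rw [this, Measure.measure_preimage_neg, measure_preimage_add_right]
  rw [h2, abs_of_nonneg (by positivity), ENNReal.ofReal_inv_of_pos (by positivity),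
    ENNReal.ofReal_natCast, ← ENNReal.div_eq_inv_mul]

lemma cell_vol (A : Set ℝ) (hA : MeasurableSet A) (hAsub : A ⊆ Icc (0 : ℝ) 1)
    (M : ℕ) (hM : 0 < M) (k : ℤ) :
    volume (tentMap M ⁻¹' A ∩ Icc ((k : ℝ) / M) (((k : ℝ) + 1) / M)) = volume A / M := by
  have hMpos : (0 : ℝ) < M := by positivity
  have hdiv : ∀ x : ℝ, x ∈ Icc ((k : ℝ) / M) (((k : ℝ) + 1) / M) ↔
      (k : ℝ) ≤ (M : ℝ) * x ∧ (M : ℝ) * x ≤ (k : ℝ) + 1 := by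
    intro x
    rw [mem_Icc, div_le_iff₀ hMpos, le_div_iff₀ hMpos, mul_comm x (M : ℝ)]
  rcases Int.even_or_odd k with ⟨j, hj⟩ | ⟨j, hj⟩
  · have hk : (k : ℝ) = 2 * (j : ℝ) := by rw [hj]; push_cast; ring
    have hset : tentMap M ⁻¹' A ∩ Icc ((k : ℝ) / M) (((k : ℝ) + 1) / M)
        = (fun x : ℝ => (1 : ℝ) * ((M : ℝ) * x) + (-(2 * (j : ℝ)))) ⁻¹' A := by
      ext x
      rw [mem_inter_iff, hdiv x, hk]
      simp only [mem_preimage, one_mul]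
      constructor
      · rintro ⟨hxA, h0, h1⟩
        rwa [tent_cell_even M j x (by linarith) (by linarith)] at hxA
      · intro h
        have hmem := hAsub h
        simp only [mem_Icc] at hmem
        have h0 : 2 * (j : ℝ) ≤ (M : ℝ) * x := by linarith [hmem.1]
        have h1 : (M : ℝ) * x ≤ 2 * (j : ℝ) + 1 := by linarith [hmem.2]
        refine ⟨?_, h0, by linarith⟩
        rwa [tent_cell_even M j x h0 h1]
    rw [hset, vol_affine_preimage A hA M hM _ _ (Or.inl rfl)]
  · have hk : (k : ℝ) = 2 * (j : ℝ) + 1 := by rw [hj]; push_cast; ring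
    have hset : tentMap M ⁻¹' A ∩ Icc ((k : ℝ) / M) (((k : ℝ) + 1) / M)
        = (fun x : ℝ => (-1 : ℝ) * ((M : ℝ) * x) + (2 * (j : ℝ) + 2)) ⁻¹' A := by
      ext x
      rw [mem_inter_iff, hdiv x, hk]
      simp only [mem_preimage]
      constructor
      · rintro ⟨hxA, h0, h1⟩
        rw [tent_cell_odd M j x (by linarith) (by linarith)] at hxA
        convert hxA using 1
        ring
      · intro h
        have h' : 2 * (j : ℝ) + 2 - (M : ℝ) * x ∈ A := by
          convert h using 1; ring
        have hmem := hAsub h'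
        simp only [mem_Icc] at hmem
        have h0 : 2 * (j : ℝ) + 1 ≤ (M : ℝ) * x := by linarith [hmem.2]
        have h1 : (M : ℝ) * x ≤ 2 * (j : ℝ) + 2 := by linarith [hmem.1]
        refine ⟨?_, by linarith, by linarith⟩
        rw [tent_cell_odd M j x h0 h1]
        exact h'
    rw [hset, vol_affine_preimage A hA M hM _ _ (Or.inr rfl)]
lemma vol_inter_Ioc_eq_Icc (P : Set ℝ) {a b : ℝ} :
    volume (P ∩ Ioc a b) = volume (P ∩ Icc a b) := by
  apply le_antisymm (measure_mono (inter_subset_inter_right _ Ioc_subset_Icc_self))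
  calc volume (P ∩ Icc a b) ≤ volume ((P ∩ Ioc a b) ∪ {a}) := by
        apply measure_mono
        rintro x ⟨hxP, hx1, hx2⟩
        rcases eq_or_lt_of_le hx1 with h | h
        · exact Or.inr (by simp [← h])
        · exact Or.inl ⟨hxP, h, hx2⟩
    _ ≤ volume (P ∩ Ioc a b) + volume ({a} : Set ℝ) := measure_union_le _ _
    _ = volume (P ∩ Ioc a b) := by simp

lemma vol_inter_Ioo_eq_Ioc (P : Set ℝ) {a b : ℝ} :
    volume (P ∩ Ioo a b) = volume (P ∩ Ioc a b) := by
  apply le_antisymm (measure_mono (inter_subset_inter_right _ Ioo_subset_Ioc_self))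
  calc volume (P ∩ Ioc a b) ≤ volume ((P ∩ Ioo a b) ∪ {b}) := by
        apply measure_mono
        rintro x ⟨hxP, hx1, hx2⟩
        rcases eq_or_lt_of_le hx2 with h | h
        · exact Or.inr (by simp [h])
        · exact Or.inl ⟨hxP, hx1, h⟩
    _ ≤ volume (P ∩ Ioo a b) + volume ({b} : Set ℝ) := measure_union_le _ _
    _ = volume (P ∩ Ioo a b) := by simp

lemma tentMap_measurable (M : ℕ) : Measurable (tentMap M) := by
  unfold tentMap
  exact measurable_const.sub
    (((measurable_fract.comp ((measurable_id.const_mul ((M : ℝ))).div_const 2)).const_mul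
      2).sub measurable_const).abs

lemma vol_A_ne_top (A : Set ℝ) (hAsub : A ⊆ Icc (0 : ℝ) 1) : volume A ≠ ⊤ := by
  refine ne_of_lt (lt_of_le_of_lt (measure_mono hAsub) ?_)
  rw [Real.volume_Icc]
  exact ENNReal.ofReal_lt_top

lemma F_formula (A : Set ℝ) (hA : MeasurableSet A) (hAsub : A ⊆ Icc (0 : ℝ) 1)
    (M : ℕ) (hM : 0 < M) (j : ℕ) :
    volume (tentMap M ⁻¹' A ∩ Ioc (-1 : ℝ) (-1 + j / M)) = j * volume A / M := by
  have hMpos : (0 : ℝ) < M := by positivity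
  induction j with
  | zero => simp
  | succ j ih =>
    have hjM : (0 : ℝ) ≤ (j : ℝ) / M := by positivity
    have h1 : (-1 : ℝ) ≤ -1 + j / M := by linarith
    have h2 : (-1 : ℝ) + j / M ≤ -1 + ((j : ℝ) + 1) / M := by
      have : (j : ℝ) / M ≤ ((j : ℝ) + 1) / M := by gcongr <;> linarith
      linarith
    have hdisj : Disjoint (tentMap M ⁻¹' A ∩ Ioc (-1 : ℝ) (-1 + j / M))
        (tentMap M ⁻¹' A ∩ Ioc (-1 + (j : ℝ) / M) (-1 + ((j : ℝ) + 1) / M)) := by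
      refine Disjoint.mono inter_subset_right inter_subset_right ?_
      rw [Set.disjoint_left]
      rintro x ⟨_, hx2⟩ ⟨hx3, _⟩
      exact absurd hx3 (not_lt.mpr hx2)
    have hmeas : MeasurableSet
        (tentMap M ⁻¹' A ∩ Ioc (-1 + (j : ℝ) / M) (-1 + ((j : ℝ) + 1) / M)) :=
      ((tentMap_measurable M) hA).inter measurableSet_Ioc
    have hcell : volume (tentMap M ⁻¹' A ∩ Ioc (-1 + (j : ℝ) / M) (-1 + ((j : ℝ) + 1) / M))
        = volume A / M := by
      rw [vol_inter_Ioc_eq_Icc,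
        show (-1 : ℝ) + (j : ℝ) / M = (((j : ℤ) - M : ℤ) : ℝ) / M by push_cast; field_simp; ring,
        show (-1 : ℝ) + ((j : ℝ) + 1) / M = ((((j : ℤ) - M : ℤ) : ℝ) + 1) / M by
          push_cast; field_simp; ring]
      exact cell_vol A hA hAsub M hM _
    rw [show ((j + 1 : ℕ) : ℝ) = (j : ℝ) + 1 from by push_cast; ring,
      ← Ioc_union_Ioc_eq_Ioc h1 h2, inter_union_distrib_left,
      measure_union hdisj hmeas, ih, hcell, ENNReal.div_add_div_same]
    congr 1
    rw [Nat.cast_succ, add_mul, one_mul]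
lemma vol_P_Ioc_ne_top (P : Set ℝ) (u v : ℝ) : volume (P ∩ Ioc u v) ≠ ⊤ :=
  ne_of_lt (lt_of_le_of_lt (measure_mono inter_subset_right)
    (by rw [Real.volume_Ioc]; exact ENNReal.ofReal_lt_top))

lemma F_toReal (A : Set ℝ) (hA : MeasurableSet A) (hAsub : A ⊆ Icc (0 : ℝ) 1)
    (M : ℕ) (hM : 0 < M) (j : ℕ) :
    (volume (tentMap M ⁻¹' A ∩ Ioc (-1 : ℝ) (-1 + j / M))).toReal
      = j * (volume A).toReal / M := by
  rw [F_formula A hA hAsub M hM j, ENNReal.toReal_div, ENNReal.toReal_mul,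
    ENNReal.toReal_natCast, ENNReal.toReal_natCast]

lemma F_bounds (A : Set ℝ) (hA : MeasurableSet A) (hAsub : A ⊆ Icc (0 : ℝ) 1)
    (M : ℕ) (hM : 0 < M) (t : ℝ) (ht1 : -1 ≤ t) (ht2 : t ≤ 2) :
    (volume A).toReal * (t + 1) - (volume A).toReal / M
      ≤ (volume (tentMap M ⁻¹' A ∩ Ioc (-1 : ℝ) t)).toReal ∧
    (volume (tentMap M ⁻¹' A ∩ Ioc (-1 : ℝ) t)).toReal
      ≤ (volume A).toReal * (t + 1) + (volume A).toReal / M := by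
  have hMpos : (0 : ℝ) < M := by positivity
  set c := (volume A).toReal with hc
  have hc0 : 0 ≤ c := ENNReal.toReal_nonneg
  have h0 : (0 : ℝ) ≤ (M : ℝ) * (t + 1) := by nlinarith
  set j : ℕ := ⌊(M : ℝ) * (t + 1)⌋.toNat with hjdef
  have hjcast : ((j : ℕ) : ℝ) = ((⌊(M : ℝ) * (t + 1)⌋ : ℤ) : ℝ) := by
    have := Int.toNat_of_nonneg (Int.floor_nonneg.mpr h0)
    exact_mod_cast congrArg (Int.cast : ℤ → ℝ) this
  have hj1 : (j : ℝ) ≤ (M : ℝ) * (t + 1) := by rw [hjcast]; exact Int.floor_le _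
  have hj2 : (M : ℝ) * (t + 1) < (j : ℝ) + 1 := by rw [hjcast]; exact Int.lt_floor_add_one _
  have ht_up : t ≤ -1 + ((j : ℝ) + 1) / M := by
    have : t + 1 < ((j : ℝ) + 1) / M := by
      rw [lt_div_iff₀ hMpos]; linarith [mul_comm (t + 1) (M : ℝ)]
    linarith
  have ht_lo : -1 + (j : ℝ) / M ≤ t := by
    have : (j : ℝ) / M ≤ t + 1 := by
      rw [div_le_iff₀ hMpos]; linarith [mul_comm (t + 1) (M : ℝ)]
    linarith
  have mup : (volume (tentMap M ⁻¹' A ∩ Ioc (-1 : ℝ) t)).toReal ≤ ((j : ℝ) + 1) * c / M := by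
    have hle : volume (tentMap M ⁻¹' A ∩ Ioc (-1 : ℝ) t)
        ≤ volume (tentMap M ⁻¹' A ∩ Ioc (-1 : ℝ) (-1 + ((j + 1 : ℕ) : ℝ) / M)) := by
      apply measure_mono (inter_subset_inter_right _ (Ioc_subset_Ioc_right ?_))
      push_cast; exact ht_up
    have := ENNReal.toReal_mono (vol_P_Ioc_ne_top _ _ _) hle
    rw [F_toReal A hA hAsub M hM (j + 1)] at this
    push_cast at this
    exact this
  have mlo : (j : ℝ) * c / M ≤ (volume (tentMap M ⁻¹' A ∩ Ioc (-1 : ℝ) t)).toReal := by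
    have hle : volume (tentMap M ⁻¹' A ∩ Ioc (-1 : ℝ) (-1 + (j : ℝ) / M))
        ≤ volume (tentMap M ⁻¹' A ∩ Ioc (-1 : ℝ) t) :=
      measure_mono (inter_subset_inter_right _ (Ioc_subset_Ioc_right ht_lo))
    have := ENNReal.toReal_mono (vol_P_Ioc_ne_top _ _ _) hle
    rwa [F_toReal A hA hAsub M hM j] at this
  constructor
  · refine le_trans ?_ mlo
    have h1 : ((M : ℝ) * (t + 1) - 1) * c / M ≤ (j : ℝ) * c / M := by
      gcongr
      linarith
    have h2 : c * (t + 1) - c / M = ((M : ℝ) * (t + 1) - 1) * c / M := by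
      field_simp
    linarith
  · refine le_trans mup ?_
    have h1 : ((j : ℝ) + 1) * c / M ≤ ((M : ℝ) * (t + 1) + 1) * c / M := by
      gcongr
    have h2 : c * (t + 1) + c / M = ((M : ℝ) * (t + 1) + 1) * c / M := by
      field_simp
    linarith

lemma interval_est (A : Set ℝ) (hA : MeasurableSet A) (hAsub : A ⊆ Icc (0 : ℝ) 1)
    (M : ℕ) (hM : 0 < M) {a b : ℝ} (hab : a ≤ b) (ha : -1 ≤ a) (hb : b ≤ 2) :
    |(volume (tentMap M ⁻¹' A ∩ Ioc a b)).toReal - (volume A).toReal * (b - a)|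
      ≤ 2 * (volume A).toReal / M := by
  obtain ⟨la, ua⟩ := F_bounds A hA hAsub M hM a ha (le_trans hab hb)
  obtain ⟨lb, ub⟩ := F_bounds A hA hAsub M hM b (le_trans ha hab) hb
  have hsplit : volume (tentMap M ⁻¹' A ∩ Ioc (-1 : ℝ) b)
      = volume (tentMap M ⁻¹' A ∩ Ioc (-1 : ℝ) a) + volume (tentMap M ⁻¹' A ∩ Ioc a b) := by
    rw [← Ioc_union_Ioc_eq_Ioc ha hab, inter_union_distrib_left]
    apply measure_union
    · refine Disjoint.mono inter_subset_right inter_subset_right ?_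
      rw [Set.disjoint_left]
      rintro x ⟨_, hx2⟩ ⟨hx3, _⟩
      exact absurd hx3 (not_lt.mpr hx2)
    · exact ((tentMap_measurable M) hA).inter measurableSet_Ioc
  have hre : (volume (tentMap M ⁻¹' A ∩ Ioc (-1 : ℝ) b)).toReal
      = (volume (tentMap M ⁻¹' A ∩ Ioc (-1 : ℝ) a)).toReal
        + (volume (tentMap M ⁻¹' A ∩ Ioc a b)).toReal := by
    rw [hsplit, ENNReal.toReal_add (vol_P_Ioc_ne_top _ _ _) (vol_P_Ioc_ne_top _ _ _)]
  have hring : (volume A).toReal * (b - a)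
      = (volume A).toReal * (b + 1) - (volume A).toReal * (a + 1) := by ring
  have h2m : 2 * (volume A).toReal / M
      = (volume A).toReal / M + (volume A).toReal / M := by ring
  rw [abs_le]
  constructor
  · linarith
  · linarith

def okp (p : ℝ × ℝ) : Prop := p.2 ≤ p.1 ∨ (-1 ≤ p.1 ∧ p.2 ≤ 2)

lemma est_Ioo (A : Set ℝ) (hA : MeasurableSet A) (hAsub : A ⊆ Icc (0 : ℝ) 1)
    (M : ℕ) (hM : 0 < M) (p : ℝ × ℝ) (hp : okp p) :
    |(volume (tentMap M ⁻¹' A ∩ Ioo p.1 p.2)).toReal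
        - (volume A).toReal * (volume (Ioo p.1 p.2)).toReal|
      ≤ 2 * (volume A).toReal / M := by
  rcases le_or_gt p.2 p.1 with h | h
  · rw [Ioo_eq_empty (not_lt.mpr h)]
    simp only [inter_empty, measure_empty, ENNReal.toReal_zero, mul_zero, sub_zero, abs_zero]
    positivity
  · rcases hp with h' | ⟨h1, h2⟩
    · linarith
    · rw [vol_inter_Ioo_eq_Ioc, Real.volume_Ioo, ENNReal.toReal_ofReal (by linarith)]
      exact interval_est A hA hAsub M hM h.le h1 h2
def IU : List (ℝ × ℝ) → Set ℝ
  | [] => ∅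
  | p :: L => Ioo p.1 p.2 ∪ IU L

lemma IU_meas : ∀ L : List (ℝ × ℝ), MeasurableSet (IU L)
  | [] => MeasurableSet.empty
  | p :: L => (measurableSet_Ioo).union (IU_meas L)

lemma IU_vol_ne_top : ∀ L : List (ℝ × ℝ), volume (IU L) ≠ ⊤
  | [] => by simp [IU]
  | p :: L => by
    refine ne_of_lt (lt_of_le_of_lt (measure_union_le _ _) ?_)
    rw [ENNReal.add_lt_top]
    exact ⟨by rw [Real.volume_Ioo]; exact ENNReal.ofReal_lt_top,
      lt_of_le_of_ne le_top (IU_vol_ne_top L)⟩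

lemma IU_inter (c d : ℝ) : ∀ L : List (ℝ × ℝ),
    Ioo c d ∩ IU L = IU (L.map fun p => (max p.1 c, min p.2 d))
  | [] => by simp [IU]
  | p :: L => by
    simp only [IU, List.map_cons, inter_union_distrib_left, IU_inter c d L, Ioo_inter_Ioo,
      max_comm c p.1, min_comm d p.2]

lemma IU_subset {S : Set ℝ} : ∀ L : List (ℝ × ℝ),
    (∀ p ∈ L, Ioo p.1 p.2 ⊆ S) → IU L ⊆ S
  | [], _ => empty_subset S
  | p :: L, h => union_subset (h p List.mem_cons_self)
      (IU_subset L fun q hq => h q (List.mem_cons_of_mem p hq))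

lemma okp_inter {c d : ℝ} (p : ℝ × ℝ) (hp : okp p) : okp (max p.1 c, min p.2 d) := by
  rcases le_or_gt (min p.2 d) (max p.1 c) with h | h
  · exact Or.inl h
  · rcases hp with h' | ⟨h1, h2⟩
    · exact absurd (lt_of_le_of_lt (le_max_left _ _) h)
        (not_lt.mpr (le_trans (min_le_left _ _) h'))
    · exact Or.inr ⟨le_trans h1 (le_max_left _ _), le_trans (min_le_left _ _) h2⟩

lemma vol_P_IU_ne_top (P : Set ℝ) (L : List (ℝ × ℝ)) : volume (P ∩ IU L) ≠ ⊤ :=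
  ne_of_lt (lt_of_le_of_lt (measure_mono inter_subset_right)
    (lt_of_le_of_ne le_top (IU_vol_ne_top L)))

lemma est_IU (A : Set ℝ) (hA : MeasurableSet A) (hAsub : A ⊆ Icc (0 : ℝ) 1)
    (M : ℕ) (hM : 0 < M) :
    ∀ (n : ℕ) (L : List (ℝ × ℝ)), L.length = n → (∀ p ∈ L, okp p) →
    |(volume (tentMap M ⁻¹' A ∩ IU L)).toReal
        - (volume A).toReal * (volume (IU L)).toReal|
      ≤ (2 ^ (n + 1) - 2) * (volume A).toReal / M := by
  intro n
  induction n with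
  | zero =>
    intro L hL _
    rw [List.length_eq_zero_iff.mp hL]
    simp [IU]
  | succ n ih =>
    rintro L hL hok
    obtain ⟨p, L', rfl⟩ : ∃ p L', L = p :: L' := by
      cases L with
      | nil => simp at hL
      | cons p L' => exact ⟨p, L', rfl⟩
    have hL' : L'.length = n := by simpa using hL
    have hokL' : ∀ q ∈ L', okp q := fun q hq => hok q (List.mem_cons_of_mem p hq)
    set P := tentMap M ⁻¹' A with hP
    have hPmeas : MeasurableSet P := (tentMap_measurable M) hA
    set I := Ioo p.1 p.2 with hI
    set V := IU L' with hV
    have hImeas : MeasurableSet I := measurableSet_Ioo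
    have hVmeas : MeasurableSet V := IU_meas L'
    have hIvol : volume I ≠ ⊤ := by rw [hI, Real.volume_Ioo]; exact ENNReal.ofReal_ne_top
    have hVvol : volume V ≠ ⊤ := IU_vol_ne_top L'
    have hIUcons : IU (p :: L') = I ∪ V := rfl
    have hIV : I ∩ V = IU (L'.map fun q => (max q.1 p.1, min q.2 p.2)) := IU_inter _ _ L'
    -- measure identities
    have e1 : volume (P ∩ (I ∪ V)) + volume (P ∩ (I ∩ V))
        = volume (P ∩ I) + volume (P ∩ V) := by
      have h := measure_union_add_inter (μ := volume) (s := P ∩ I) (t := P ∩ V)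
        (hPmeas.inter hVmeas)
      rwa [← inter_union_distrib_left, ← inter_inter_distrib_left] at h
    have e2 : volume (I ∪ V) + volume (I ∩ V) = volume I + volume V :=
      measure_union_add_inter (μ := volume) (s := I) (t := V) hVmeas
    -- real versions
    have hPI : volume (P ∩ I) ≠ ⊤ :=
      ne_of_lt (lt_of_le_of_lt (measure_mono inter_subset_right)
        (lt_of_le_of_ne le_top hIvol))
    have hPV : volume (P ∩ V) ≠ ⊤ := vol_P_IU_ne_top P L'
    have hPIuV : volume (P ∩ (I ∪ V)) ≠ ⊤ := by
      refine ne_of_lt (lt_of_le_of_lt (measure_mono (inter_subset_inter_right _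
        subset_rfl)) ?_)
      calc volume (P ∩ (I ∪ V)) ≤ volume (P ∩ I) + volume (P ∩ V) := by
            rw [inter_union_distrib_left]; exact measure_union_le _ _
        _ < ⊤ := by
            rw [ENNReal.add_lt_top]
            exact ⟨lt_of_le_of_ne le_top hPI, lt_of_le_of_ne le_top hPV⟩
    have hPIiV : volume (P ∩ (I ∩ V)) ≠ ⊤ :=
      ne_of_lt (lt_of_le_of_lt (measure_mono (inter_subset_inter_right _ inter_subset_left))
        (lt_of_le_of_ne le_top hPI))
    have hIuV : volume (I ∪ V) ≠ ⊤ := by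
      refine ne_of_lt (lt_of_le_of_lt (measure_union_le _ _) ?_)
      rw [ENNReal.add_lt_top]
      exact ⟨lt_of_le_of_ne le_top hIvol, lt_of_le_of_ne le_top hVvol⟩
    have hIiV : volume (I ∩ V) ≠ ⊤ :=
      ne_of_lt (lt_of_le_of_lt (measure_mono inter_subset_left)
        (lt_of_le_of_ne le_top hIvol))
    have r1 : (volume (P ∩ (I ∪ V))).toReal + (volume (P ∩ (I ∩ V))).toReal
        = (volume (P ∩ I)).toReal + (volume (P ∩ V)).toReal := by
      rw [← ENNReal.toReal_add hPIuV hPIiV, ← ENNReal.toReal_add hPI hPV, e1]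
    have r2 : (volume (I ∪ V)).toReal + (volume (I ∩ V)).toReal
        = (volume I).toReal + (volume V).toReal := by
      rw [← ENNReal.toReal_add hIuV hIiV, ← ENNReal.toReal_add hIvol hVvol, e2]
    -- the three estimates
    have eI := est_Ioo A hA hAsub M hM p (hok p List.mem_cons_self)
    have eV := ih L' hL' hokL'
    have eIV := ih (L'.map fun q => (max q.1 p.1, min q.2 p.2))
      (by simpa using hL') (by
        intro q hq
        obtain ⟨q', hq', rfl⟩ := List.mem_map.mp hq
        exact okp_inter q' (hokL' q' hq'))
    rw [← hIV] at eIV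
    rw [hIUcons]
    have hc0 : (0 : ℝ) ≤ (volume A).toReal := ENNReal.toReal_nonneg
    have hM0 : (0 : ℝ) < M := by positivity
    have r2c : (volume A).toReal * (volume (I ∪ V)).toReal
        + (volume A).toReal * (volume (I ∩ V)).toReal
        = (volume A).toReal * (volume I).toReal + (volume A).toReal * (volume V).toReal := by
      rw [← mul_add, ← mul_add, r2]
    have key : (2 ^ (n + 1 + 1) - 2) * (volume A).toReal / M
        = 2 * (volume A).toReal / M + (2 ^ (n + 1) - 2) * (volume A).toReal / M
          + (2 ^ (n + 1) - 2) * (volume A).toReal / M := by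
      field_simp
      ring
    rw [abs_le] at eI eV eIV ⊢
    constructor
    · rw [key]; linarith [eI.1, eI.2, eV.1, eV.2, eIV.1, eIV.2]
    · rw [key]; linarith [eI.1, eI.2, eV.1, eV.2, eIV.1, eIV.2]
lemma IU_mem (x : ℝ) : ∀ L : List (ℝ × ℝ), x ∈ IU L ↔ ∃ p ∈ L, x ∈ Ioo p.1 p.2
  | [] => by simp [IU]
  | p :: L => by
    simp [IU, IU_mem x L, or_and_right, exists_or]

lemma toReal_le_add_of_le {a b c : ENNReal} (h : a ≤ b + c) (hb : b ≠ ⊤) (hc : c ≠ ⊤) :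
    a.toReal ≤ b.toReal + c.toReal := by
  have := ENNReal.toReal_mono (ENNReal.add_ne_top.mpr ⟨hb, hc⟩) h
  rwa [ENNReal.toReal_add hb hc] at this

lemma main_est (A B : Set ℝ) (hA : MeasurableSet A) (hB : MeasurableSet B)
    (hAsub : A ⊆ Set.Icc (0 : ℝ) 1) (hBsub : B ⊆ Set.Icc (0 : ℝ) 1)
    (ε : ℝ) (hε : 0 < ε) :
    ∃ N : ℕ, ∀ M : ℕ, N ≤ M → 0 < M →
      |(volume (tentMap M ⁻¹' A ∩ B)).toReal
          - (volume A).toReal * (volume B).toReal| < ε := by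
  have hvA : volume A ≠ ⊤ := vol_A_ne_top A hAsub
  have hvB : volume B ≠ ⊤ := vol_A_ne_top B hBsub
  set c := (volume A).toReal with hc
  have hc0 : 0 ≤ c := ENNReal.toReal_nonneg
  have hc1 : c ≤ 1 := by
    rw [hc, show (1 : ℝ) = (volume (Icc (0:ℝ) 1)).toReal by
      rw [Real.volume_Icc]; norm_num]
    exact ENNReal.toReal_mono (by rw [Real.volume_Icc]; exact ENNReal.ofReal_ne_top)
      (measure_mono hAsub)
  set ε6 : ℝ := ε / 6 with hε6def
  have hε6 : 0 < ε6 := by positivity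
  have hε6ne : (ENNReal.ofReal ε6) ≠ 0 := (ENNReal.ofReal_pos.mpr hε6).ne'
  -- compact inner approximation
  obtain ⟨K, hKB, hKcomp, hKvol⟩ := hB.exists_isCompact_diff_lt hvB hε6ne
  -- open outer approximation
  obtain ⟨U, hBU, hUopen, -, hUvol⟩ := hB.exists_isOpen_diff_lt hvB hε6ne
  set U' : Set ℝ := U ∩ Ioo (-1) 2 with hU'def
  have hU'open : IsOpen U' := hUopen.inter isOpen_Ioo
  have hBIoo : B ⊆ Ioo (-1 : ℝ) 2 := fun x hx => by
    have := hBsub hx; exact ⟨by linarith [this.1], by linarith [this.2]⟩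
  have hBU' : B ⊆ U' := fun x hx => ⟨hBU hx, hBIoo hx⟩
  have hKU' : K ⊆ U' := hKB.trans hBU'
  -- cover K by finitely many clipped intervals
  have hball : ∀ x : K, ∃ δ : ℝ, 0 < δ ∧ Metric.ball (x : ℝ) δ ⊆ U' := fun x =>
    Metric.isOpen_iff.mp hU'open x (hKU' x.2)
  choose δ hδpos hδsub using hball
  have hcover : K ⊆ ⋃ x : K, Metric.ball (x : ℝ) (δ x) := fun x hx =>
    mem_iUnion.mpr ⟨⟨x, hx⟩, Metric.mem_ball_self (hδpos _)⟩
  obtain ⟨t, ht⟩ := hKcomp.elim_finite_subcover (fun x : K => Metric.ball (x : ℝ) (δ x))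
    (fun _ => Metric.isOpen_ball) hcover
  set L : List (ℝ × ℝ) :=
    t.toList.map (fun x : K => (max ((x : ℝ) - δ x) (-1), min ((x : ℝ) + δ x) 2)) with hLdef
  set V : Set ℝ := IU L with hVdef
  have hIoo_sub : ∀ x : K, Ioo (max ((x : ℝ) - δ x) (-1)) (min ((x : ℝ) + δ x) 2) ⊆ U' := by
    intro x
    rw [show Ioo (max ((x : ℝ) - δ x) (-1)) (min ((x : ℝ) + δ x) 2)
        = Ioo ((x : ℝ) - δ x) ((x : ℝ) + δ x) ∩ Ioo (-1) 2 by
      rw [Ioo_inter_Ioo]]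
    refine inter_subset_left.trans ?_
    rw [← Real.ball_eq_Ioo]
    exact hδsub x
  have hVU' : V ⊆ U' := by
    apply IU_subset
    intro p hp
    obtain ⟨x, hx, rfl⟩ := List.mem_map.mp hp
    exact hIoo_sub x
  have hKV : K ⊆ V := by
    intro x hx
    obtain ⟨i, hi, hxi⟩ := mem_iUnion₂.mp (ht hx)
    rw [hVdef, IU_mem]
    refine ⟨(max ((i : ℝ) - δ i) (-1), min ((i : ℝ) + δ i) 2),
      List.mem_map.mpr ⟨i, Finset.mem_toList.mpr hi, rfl⟩, ?_⟩
    have hxIoo : x ∈ Ioo ((i : ℝ) - δ i) ((i : ℝ) + δ i) := by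
      rw [← Real.ball_eq_Ioo]; exact hxi
    have hxIoo2 : x ∈ Ioo (-1 : ℝ) 2 := hBIoo (hKB hx)
    exact ⟨max_lt hxIoo.1 hxIoo2.1, lt_min hxIoo.2 hxIoo2.2⟩
  have hokL : ∀ p ∈ L, okp p := by
    intro p hp
    obtain ⟨x, hx, rfl⟩ := List.mem_map.mp hp
    exact Or.inr ⟨le_max_right _ _, min_le_right _ _⟩
  set n := L.length with hn
  obtain ⟨N0, hN0⟩ := exists_nat_gt ((2 : ℝ) ^ (n + 1) / ε6)
  refine ⟨N0 + 1, ?_⟩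
  intro M hM hMpos
  have hMr : (0 : ℝ) < M := by positivity
  have hMN : (2 : ℝ) ^ (n + 1) / M < ε6 := by
    rw [div_lt_iff₀ hMr]
    have h1 : (2 : ℝ) ^ (n + 1) / ε6 < M :=
      lt_of_lt_of_le hN0 (by exact_mod_cast Nat.le_of_succ_le hM)
    rw [div_lt_iff₀ hε6] at h1
    nlinarith
  set P := tentMap M ⁻¹' A with hPdef
  have hPmeas : MeasurableSet P := (tentMap_measurable M) hA
  have hVmeas : MeasurableSet V := IU_meas L
  have hest := est_IU A hA hAsub M hMpos n L rfl hokL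
  have hp2 : (2 : ℝ) ≤ 2 ^ (n + 1) := by
    calc (2 : ℝ) = 2 ^ 1 := (pow_one 2).symm
    _ ≤ 2 ^ (n + 1) := by
      apply pow_le_pow_right₀ (by norm_num)
      omega
  have hVest : |(volume (P ∩ V)).toReal - c * (volume V).toReal| < ε6 := by
    refine lt_of_le_of_lt (hest.trans ?_) hMN
    gcongr
    nlinarith
  have hBK : (volume (B \ K)).toReal ≤ ε6 := by
    have := ENNReal.toReal_mono ENNReal.ofReal_ne_top hKvol.le
    rwa [ENNReal.toReal_ofReal hε6.le] at this
  have hU'B : (volume (U' \ B)).toReal ≤ ε6 := by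
    have hle : volume (U' \ B) ≤ volume (U \ B) :=
      measure_mono (diff_subset_diff_left inter_subset_left)
    have := ENNReal.toReal_mono ENNReal.ofReal_ne_top (hle.trans hUvol.le)
    rwa [ENNReal.toReal_ofReal hε6.le] at this
  have hfin2 : volume (P ∩ V) ≠ ⊤ := vol_P_IU_ne_top P L
  have hfinV : volume V ≠ ⊤ := IU_vol_ne_top L
  have hfinBK : volume (B \ K) ≠ ⊤ :=
    ne_of_lt (lt_of_le_of_lt (measure_mono diff_subset) (lt_of_le_of_ne le_top hvB))
  have hfinU'B : volume (U' \ B) ≠ ⊤ :=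
    ne_of_lt (lt_of_le_of_lt (measure_mono (diff_subset.trans inter_subset_right))
      (by rw [Real.volume_Ioo]; exact ENNReal.ofReal_lt_top))
  have s1 : P ∩ B ⊆ (P ∩ V) ∪ (B \ K) := by
    rintro x ⟨hxP, hxB⟩
    by_cases hxV : x ∈ V
    · exact Or.inl ⟨hxP, hxV⟩
    · exact Or.inr ⟨hxB, fun hK => hxV (hKV hK)⟩
  have s2 : P ∩ V ⊆ (P ∩ B) ∪ (U' \ B) := by
    rintro x ⟨hxP, hxV⟩
    by_cases hxB : x ∈ B
    · exact Or.inl ⟨hxP, hxB⟩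
    · exact Or.inr ⟨hVU' hxV, hxB⟩
  have s3 : B ⊆ V ∪ (B \ K) := by
    intro x hxB
    by_cases hxV : x ∈ V
    · exact Or.inl hxV
    · exact Or.inr ⟨hxB, fun hK => hxV (hKV hK)⟩
  have s4 : V ⊆ B ∪ (U' \ B) := by
    intro x hxV
    by_cases hxB : x ∈ B
    · exact Or.inl hxB
    · exact Or.inr ⟨hVU' hxV, hxB⟩
  have hfin1 : volume (P ∩ B) ≠ ⊤ :=
    ne_of_lt (lt_of_le_of_lt (measure_mono inter_subset_right) (lt_of_le_of_ne le_top hvB))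
  have r1 : (volume (P ∩ B)).toReal
      ≤ (volume (P ∩ V)).toReal + (volume (B \ K)).toReal :=
    toReal_le_add_of_le ((measure_mono s1).trans (measure_union_le _ _)) hfin2 hfinBK
  have r2 : (volume (P ∩ V)).toReal
      ≤ (volume (P ∩ B)).toReal + (volume (U' \ B)).toReal :=
    toReal_le_add_of_le ((measure_mono s2).trans (measure_union_le _ _)) hfin1 hfinU'B
  have r3 : (volume B).toReal ≤ (volume V).toReal + (volume (B \ K)).toReal :=
    toReal_le_add_of_le ((measure_mono s3).trans (measure_union_le _ _)) hfinV hfinBK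
  have r4 : (volume V).toReal ≤ (volume B).toReal + (volume (U' \ B)).toReal :=
    toReal_le_add_of_le ((measure_mono s4).trans (measure_union_le _ _)) hvB hfinU'B
  have hub0 : (0 : ℝ) ≤ (volume (U' \ B)).toReal := ENNReal.toReal_nonneg
  have hbk0 : (0 : ℝ) ≤ (volume (B \ K)).toReal := ENNReal.toReal_nonneg
  have m1 : c * (volume V).toReal ≤ c * (volume B).toReal + ε6 := by
    nlinarith [mul_le_mul_of_nonneg_left r4 hc0]
  have m2 : c * (volume B).toReal ≤ c * (volume V).toReal + ε6 := by
    nlinarith [mul_le_mul_of_nonneg_left r3 hc0]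
  rw [abs_lt] at hVest
  rw [abs_lt]
  constructor
  · linarith
  · linarith

/-- For `m ≥ 2`, the multiple-tent map `g_m` is strongly mixing with
respect to Lebesgue measure restricted to `[0,1]`: for all measurable
`A, B ⊆ [0,1]`, `μ((g_mⁿ)⁻¹(A) ∩ B) → μ(A)·μ(B)` as `n → ∞`. -/
theorem tentMap_strongly_mixing (m : ℕ) (hm : 2 ≤ m)
    (A B : Set ℝ) (hA : MeasurableSet A) (hB : MeasurableSet B)
    (hAsub : A ⊆ Set.Icc (0 : ℝ) 1) (hBsub : B ⊆ Set.Icc (0 : ℝ) 1) :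
    Tendsto
      (fun n : ℕ => (volume.restrict (Set.Icc (0 : ℝ) 1)) ((tentMap m)^[n] ⁻¹' A ∩ B))
      atTop
      (𝓝 ((volume.restrict (Set.Icc (0 : ℝ) 1)) A *
          (volume.restrict (Set.Icc (0 : ℝ) 1)) B)) := by
  have hvA : volume A ≠ ⊤ := vol_A_ne_top A hAsub
  have hvB : volume B ≠ ⊤ := vol_A_ne_top B hBsub
  have hmeasn : ∀ n : ℕ, MeasurableSet ((tentMap m)^[n] ⁻¹' A ∩ B) := fun n =>
    (((tentMap_measurable m).iterate n) hA).inter hB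
  have hrw : ∀ n : ℕ, (volume.restrict (Set.Icc (0 : ℝ) 1)) ((tentMap m)^[n] ⁻¹' A ∩ B)
      = volume ((tentMap m)^[n] ⁻¹' A ∩ B) := by
    intro n
    rw [Measure.restrict_apply (hmeasn n), inter_eq_left.mpr (inter_subset_right.trans hBsub)]
  have hrA : (volume.restrict (Set.Icc (0 : ℝ) 1)) A = volume A := by
    rw [Measure.restrict_apply hA, inter_eq_left.mpr hAsub]
  have hrB : (volume.restrict (Set.Icc (0 : ℝ) 1)) B = volume B := by
    rw [Measure.restrict_apply hB, inter_eq_left.mpr hBsub]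
  rw [hrA, hrB]
  rw [tendsto_congr hrw]
  have hfin : ∀ n : ℕ, volume ((tentMap m)^[n] ⁻¹' A ∩ B) ≠ ⊤ := fun n =>
    ne_of_lt (lt_of_le_of_lt (measure_mono inter_subset_right) (lt_of_le_of_ne le_top hvB))
  rw [← ENNReal.tendsto_toReal_iff hfin (ENNReal.mul_ne_top hvA hvB)]
  rw [Metric.tendsto_atTop]
  intro ε hε
  obtain ⟨N0, hN0⟩ := main_est A B hA hB hAsub hBsub ε hε
  refine ⟨N0 + 1, ?_⟩
  intro n hn
  have hn1 : 1 ≤ n := by omega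
  have hpow : N0 ≤ m ^ n := by
    have h1 : n < m ^ n := Nat.lt_pow_self (by omega)
    omega
  have hppos : 0 < m ^ n := Nat.pow_pos (by omega)
  rw [tent_iterate m n hn1, Real.dist_eq, ENNReal.toReal_mul]
  exact hN0 (m ^ n) hpow hppos
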